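/- For positive integers m and n, the total chromatic number of the complete bipartite graph K_{m,n} equals max{m,n}+1 if m ≠ n, and equals n+2 if m = n. -/

import Mathlib

namespace ITC

variable {V : Type*}

/-- A total coloring: proper on vertices, edges, and incident vertex-edge pairs. -/
def IsTotalColoring (G : SimpleGraph V) (cv : V → ℕ) (ce : Sym2 V → ℕ) : Prop :=
  (∀ u v, G.Adj u v → cv u ≠ cv v) ∧
  (∀ e f, e ∈ G.edgeSet → f ∈ G.edgeSet → e ≠ f → (∃ w, w ∈ e ∧ w ∈ f) → ce e ≠ ce f) ∧
  (∀ v e, e ∈ G.edgeSet → v ∈ e → cv v ≠ ce e)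

/-- The set of colors on a vertex `v` together with its incident edges. -/
def palette (G : SimpleGraph V) (cv : V → ℕ) (ce : Sym2 V → ℕ) (v : V) : Set ℕ :=
  insert (cv v) {c | ∃ e ∈ G.edgeSet, v ∈ e ∧ ce e = c}

/-- Degree of a vertex. -/
noncomputable def deg (G : SimpleGraph V) (v : V) : ℕ := (G.neighborSet v).ncard

/-- An interval total `t`-coloring. -/
def IsIntervalTotalColoring (G : SimpleGraph V) (t : ℕ) (cv : V → ℕ)
    (ce : Sym2 V → ℕ) : Prop :=
  IsTotalColoring G cv ce ∧
  (∀ v, cv v ∈ Set.Icc 1 t) ∧ (∀ e ∈ G.edgeSet, ce e ∈ Set.Icc 1 t) ∧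
  (∀ c ∈ Set.Icc 1 t, (∃ v, cv v = c) ∨ (∃ e ∈ G.edgeSet, ce e = c)) ∧
  (∀ v, ∃ a, palette G cv ce v = Set.Icc a (a + deg G v))

def HasIntervalTotalColoring (G : SimpleGraph V) (t : ℕ) : Prop :=
  ∃ cv ce, IsIntervalTotalColoring G t cv ce

/-- Minimum span of interval total colorings. -/
noncomputable def wtau (G : SimpleGraph V) : ℕ := sInf {t | HasIntervalTotalColoring G t}

/-- Maximum span of interval total colorings. -/
noncomputable def Wtau (G : SimpleGraph V) : ℕ := sSup {t | HasIntervalTotalColoring G t}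

/-- Total chromatic number: least `k` such that there is a total coloring
with colors in `{1, …, k}`. -/
noncomputable def totalChromaticNumber (G : SimpleGraph V) : ℕ :=
  sInf {k | ∃ cv ce, IsTotalColoring G cv ce ∧ (∀ v, cv v ∈ Set.Icc 1 k) ∧
    ∀ e ∈ G.edgeSet, ce e ∈ Set.Icc 1 k}

/-- A proper edge coloring. -/
def IsProperEdgeColoring (G : SimpleGraph V) (ce : Sym2 V → ℕ) : Prop :=
  ∀ e f, e ∈ G.edgeSet → f ∈ G.edgeSet → e ≠ f → (∃ w, w ∈ e ∧ w ∈ f) → ce e ≠ ce f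

/-- Colors appearing on the edges incident to `v`. -/
def edgePalette (G : SimpleGraph V) (ce : Sym2 V → ℕ) (v : V) : Set ℕ :=
  {c | ∃ e ∈ G.edgeSet, v ∈ e ∧ ce e = c}

/-- An interval (edge) `t`-coloring. -/
def IsIntervalEdgeColoring (G : SimpleGraph V) (t : ℕ) (ce : Sym2 V → ℕ) : Prop :=
  IsProperEdgeColoring G ce ∧
  (∀ e ∈ G.edgeSet, ce e ∈ Set.Icc 1 t) ∧
  (∀ c ∈ Set.Icc 1 t, ∃ e ∈ G.edgeSet, ce e = c) ∧
  (∀ v, ∃ a, edgePalette G ce v = Set.Icc (a + 1) (a + deg G v))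

/-- The hypercube `Q_n`. -/
def hypercube (n : ℕ) : SimpleGraph (Fin n → Bool) where
  Adj u v := ∃! i, u i ≠ v i
  symm := ⟨by
    rintro u v ⟨i, hi, hu⟩
    exact ⟨i, Ne.symm hi, fun j hj => hu j (Ne.symm hj)⟩⟩
  loopless := ⟨by
    rintro u ⟨i, hi, -⟩
    exact hi rfl⟩

/-- The complete graph on `Fin (2*r)` minus the perfect matching joining `i` and `i+r`. -/
def Kminus (r : ℕ) : SimpleGraph (Fin (2 * r)) where
  Adj i j := i ≠ j ∧ ¬((i : ℕ) + r = (j : ℕ) ∨ (j : ℕ) + r = (i : ℕ))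
  symm := ⟨by
    rintro i j ⟨h1, h2⟩
    exact ⟨h1.symm, fun h => h2 h.symm⟩⟩
  loopless := ⟨by
    rintro i ⟨h1, -⟩
    exact h1 rfl⟩

/-- Blow up each vertex of `H` into a copy of `β` (no edges inside copies). -/
def blowup {α : Type*} (H : SimpleGraph α) (β : Type*) : SimpleGraph (α × β) where
  Adj u v := H.Adj u.1 v.1
  symm := ⟨fun _ _ h => H.adj_symm h⟩
  loopless := ⟨fun u h => H.irrefl h⟩

section Aux
open Sum

abbrev KB (m n : ℕ) := completeBipartiteGraph (Fin m) (Fin n)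

lemma mem_edgeSet_iff {m n : ℕ} (e : Sym2 (Fin m ⊕ Fin n)) :
    e ∈ (KB m n).edgeSet ↔ ∃ i j, e = s(inl i, inr j) := by
  induction e with
  | _ u v =>
    simp only [SimpleGraph.mem_edgeSet]
    constructor
    · intro h
      rcases u with i|i <;> rcases v with j|j
      · simp at h
      · exact ⟨i, j, rfl⟩
      · exact ⟨j, i, Sym2.eq_swap⟩
      · simp at h
    · rintro ⟨i, j, h⟩
      rw [Sym2.eq_iff] at h
      rcases h with ⟨rfl, rfl⟩ | ⟨rfl, rfl⟩ <;> simp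

lemma edge_eq_iff {m n : ℕ} (i i' : Fin m) (j j' : Fin n) :
    (s(inl i, inr j) : Sym2 (Fin m ⊕ Fin n)) = s(inl i', inr j') ↔ i = i' ∧ j = j' := by
  rw [Sym2.eq_iff]; simp

noncomputable def eCol (m n N : ℕ) : Sym2 (Fin m ⊕ Fin n) → ℕ :=
  Sym2.lift ⟨fun u v => match u, v with
    | inl i, inr j => ((i : ℕ) + j) % N + 1
    | inr j, inl i => ((i : ℕ) + j) % N + 1
    | _, _ => 0, by rintro (i|i) (j|j) <;> rfl⟩

@[simp] lemma eCol_mk {m n N : ℕ} (i : Fin m) (j : Fin n) :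
    eCol m n N s(inl i, inr j) = ((i : ℕ) + j) % N + 1 := rfl

lemma mod_cancel {N a b : ℕ} (ha : a < N) (hb : b < N) (c : ℕ)
    (h : (c + a) % N = (c + b) % N) : a = b := by
  have h2 : a ≡ b [MOD N] := Nat.ModEq.add_left_cancel' c h
  rwa [Nat.ModEq, Nat.mod_eq_of_lt ha, Nat.mod_eq_of_lt hb] at h2

lemma eCol_proper {m n N : ℕ} (hm : m ≤ N) (hn : n ≤ N) :
    ∀ e f, e ∈ (KB m n).edgeSet → f ∈ (KB m n).edgeSet → e ≠ f →
      (∃ w, w ∈ e ∧ w ∈ f) → eCol m n N e ≠ eCol m n N f := by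
  intro e f he hf hef hw
  obtain ⟨i, j, rfl⟩ := (mem_edgeSet_iff e).1 he
  obtain ⟨i', j', rfl⟩ := (mem_edgeSet_iff f).1 hf
  obtain ⟨w, hwe, hwf⟩ := hw
  rw [Sym2.mem_iff] at hwe hwf
  simp only [eCol_mk, Ne, Nat.add_right_cancel_iff]
  intro hcol
  rcases hwe with rfl | rfl <;> rcases hwf with h | h
  · obtain rfl : i = i' := by simpa using h
    have : (j : ℕ) = j' := mod_cancel (by omega) (by omega) (i : ℕ) hcol
    exact hef (by rw [edge_eq_iff]; exact ⟨rfl, Fin.ext this⟩)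
  · exact absurd h (by simp)
  · exact absurd h (by simp)
  · obtain rfl : j = j' := by simpa using h
    rw [Nat.add_comm (i : ℕ), Nat.add_comm (i' : ℕ)] at hcol
    have : (i : ℕ) = i' := mod_cancel (by omega) (by omega) (j : ℕ) hcol
    exact hef (by rw [edge_eq_iff]; exact ⟨Fin.ext this, rfl⟩)

def vCol (m n N : ℕ) : Fin m ⊕ Fin n → ℕ
  | inl _ => N + 1
  | inr j => (m + (j : ℕ)) % N + 1

@[simp] lemma vCol_inl {m n N : ℕ} (i : Fin m) : vCol m n N (inl i) = N + 1 := rfl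
@[simp] lemma vCol_inr {m n N : ℕ} (j : Fin n) :
    vCol m n N (inr j) = (m + (j : ℕ)) % N + 1 := rfl

def vCol' (m n N : ℕ) : Fin m ⊕ Fin n → ℕ
  | inl i => ((i : ℕ) + n) % N + 1
  | inr _ => N + 1

@[simp] lemma vCol'_inl {m n N : ℕ} (i : Fin m) :
    vCol' m n N (inl i) = ((i : ℕ) + n) % N + 1 := rfl
@[simp] lemma vCol'_inr {m n N : ℕ} (j : Fin n) : vCol' m n N (inr j) = N + 1 := rfl

lemma upper_mem (m n N : ℕ) (hm : m < N) (hn : n ≤ N) :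
    ∃ cv ce, IsTotalColoring (KB m n) cv ce ∧
      (∀ v, cv v ∈ Set.Icc 1 (N + 1)) ∧
      ∀ e ∈ (KB m n).edgeSet, ce e ∈ Set.Icc 1 (N + 1) := by
  have hN : 0 < N := by omega
  refine ⟨vCol m n N, eCol m n N, ⟨?_, eCol_proper hm.le hn, ?_⟩, ?_, ?_⟩
  · rintro (i|i) (j|j) h <;> simp only [completeBipartiteGraph_adj] at h <;>
      try simp at h
    · have : (m + (j : ℕ)) % N < N := Nat.mod_lt _ hN
      simp; omega
    · have : (m + (i : ℕ)) % N < N := Nat.mod_lt _ hN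
      simp; omega
  · intro v e he hv
    obtain ⟨i, j, rfl⟩ := (mem_edgeSet_iff e).1 he
    rw [Sym2.mem_iff] at hv
    rcases hv with rfl | rfl
    · have : ((i : ℕ) + j) % N < N := Nat.mod_lt _ hN
      simp; omega
    · simp only [vCol_inr, eCol_mk, Ne, Nat.add_right_cancel_iff]
      rw [Nat.add_comm (i : ℕ), Nat.add_comm m]
      intro hcol
      have : (m : ℕ) = i :=
        mod_cancel hm (Nat.lt_of_lt_of_le i.is_lt hm.le) (j : ℕ) hcol
      omega
  · rintro (i|j)
    · simp
    · have : (m + (j : ℕ)) % N < N := Nat.mod_lt _ hN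
      simp [Set.mem_Icc]; omega
  · intro e he
    obtain ⟨i, j, rfl⟩ := (mem_edgeSet_iff e).1 he
    have : ((i : ℕ) + j) % N < N := Nat.mod_lt _ hN
    simp [Set.mem_Icc]; omega

lemma upper_mem' (m n N : ℕ) (hm : m ≤ N) (hn : n < N) :
    ∃ cv ce, IsTotalColoring (KB m n) cv ce ∧
      (∀ v, cv v ∈ Set.Icc 1 (N + 1)) ∧
      ∀ e ∈ (KB m n).edgeSet, ce e ∈ Set.Icc 1 (N + 1) := by
  have hN : 0 < N := by omega
  refine ⟨vCol' m n N, eCol m n N, ⟨?_, eCol_proper hm hn.le, ?_⟩, ?_, ?_⟩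
  · rintro (i|i) (j|j) h <;> simp only [completeBipartiteGraph_adj] at h <;>
      try simp at h
    · have : ((i : ℕ) + n) % N < N := Nat.mod_lt _ hN
      simp; omega
    · have : ((j : ℕ) + n) % N < N := Nat.mod_lt _ hN
      simp; omega
  · intro v e he hv
    obtain ⟨i, j, rfl⟩ := (mem_edgeSet_iff e).1 he
    rw [Sym2.mem_iff] at hv
    rcases hv with rfl | rfl
    · simp only [vCol'_inl, eCol_mk, Ne, Nat.add_right_cancel_iff]
      intro hcol
      have : (n : ℕ) = j :=
        mod_cancel hn (Nat.lt_of_lt_of_le j.is_lt hn.le) (i : ℕ) hcol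
      omega
    · have : ((i : ℕ) + j) % N < N := Nat.mod_lt _ hN
      simp; omega
  · rintro (i|j)
    · have : ((i : ℕ) + n) % N < N := Nat.mod_lt _ hN
      simp [Set.mem_Icc]; omega
    · simp
  · intro e he
    obtain ⟨i, j, rfl⟩ := (mem_edgeSet_iff e).1 he
    have : ((i : ℕ) + j) % N < N := Nat.mod_lt _ hN
    simp [Set.mem_Icc]; omega

end Aux


section Lower
open Sum

lemma lower_bound_right {m n k : ℕ} (hm : 0 < m) (cv : Fin m ⊕ Fin n → ℕ)
    (ce : Sym2 (Fin m ⊕ Fin n) → ℕ) (h : IsTotalColoring (KB m n) cv ce)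
    (hv : ∀ v, cv v ∈ Set.Icc 1 k)
    (he : ∀ e ∈ (KB m n).edgeSet, ce e ∈ Set.Icc 1 k) : n + 1 ≤ k := by
  classical
  obtain ⟨hV, hE, hI⟩ := h
  set i0 : Fin m := ⟨0, hm⟩ with hi0
  have hedge : ∀ j : Fin n, (s(inl i0, inr j) : Sym2 (Fin m ⊕ Fin n)) ∈ (KB m n).edgeSet :=
    fun j => by simp
  have hinj : Function.Injective (fun j : Fin n => ce s(inl i0, inr j)) := by
    intro j1 j2 hc
    by_contra hne
    exact hE _ _ (hedge j1) (hedge j2)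
      (by rw [Ne, edge_eq_iff]; exact fun h => hne h.2)
      ⟨inl i0, by simp, by simp⟩ hc
  set S : Finset ℕ :=
    insert (cv (inl i0)) (Finset.image (fun j : Fin n => ce s(inl i0, inr j)) Finset.univ)
    with hS
  have hnotmem : cv (inl i0) ∉ Finset.image (fun j : Fin n => ce s(inl i0, inr j)) Finset.univ := by
    simp only [Finset.mem_image, Finset.mem_univ, true_and, not_exists]
    exact fun j => fun hc => hI (inl i0) _ (hedge j) (by simp) hc.symm
  have hcard : S.card = n + 1 := by
    rw [hS, Finset.card_insert_of_notMem hnotmem, Finset.card_image_of_injective _ hinj,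
      Finset.card_univ, Fintype.card_fin]
  have hsub : S ⊆ Finset.Icc 1 k := by
    intro x hx
    rw [hS, Finset.mem_insert] at hx
    rw [Finset.mem_Icc]
    rcases hx with rfl | hx
    · exact Set.mem_Icc.1 (hv _)
    · obtain ⟨j, -, rfl⟩ := Finset.mem_image.1 hx
      exact Set.mem_Icc.1 (he _ (hedge j))
  have := Finset.card_le_card hsub
  rwa [hcard, Nat.card_Icc, Nat.add_sub_cancel] at this

lemma lower_bound_left {m n k : ℕ} (hn : 0 < n) (cv : Fin m ⊕ Fin n → ℕ)
    (ce : Sym2 (Fin m ⊕ Fin n) → ℕ) (h : IsTotalColoring (KB m n) cv ce)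
    (hv : ∀ v, cv v ∈ Set.Icc 1 k)
    (he : ∀ e ∈ (KB m n).edgeSet, ce e ∈ Set.Icc 1 k) : m + 1 ≤ k := by
  classical
  obtain ⟨hV, hE, hI⟩ := h
  set j0 : Fin n := ⟨0, hn⟩ with hj0
  have hedge : ∀ i : Fin m, (s(inl i, inr j0) : Sym2 (Fin m ⊕ Fin n)) ∈ (KB m n).edgeSet :=
    fun i => by simp
  have hinj : Function.Injective (fun i : Fin m => ce s(inl i, inr j0)) := by
    intro i1 i2 hc
    by_contra hne
    exact hE _ _ (hedge i1) (hedge i2)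
      (by rw [Ne, edge_eq_iff]; exact fun h => hne h.1)
      ⟨inr j0, by simp, by simp⟩ hc
  set S : Finset ℕ :=
    insert (cv (inr j0)) (Finset.image (fun i : Fin m => ce s(inl i, inr j0)) Finset.univ)
    with hS
  have hnotmem : cv (inr j0) ∉ Finset.image (fun i : Fin m => ce s(inl i, inr j0)) Finset.univ := by
    simp only [Finset.mem_image, Finset.mem_univ, true_and, not_exists]
    exact fun i => fun hc => hI (inr j0) _ (hedge i) (by simp) hc.symm
  have hcard : S.card = m + 1 := by
    rw [hS, Finset.card_insert_of_notMem hnotmem, Finset.card_image_of_injective _ hinj,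
      Finset.card_univ, Fintype.card_fin]
  have hsub : S ⊆ Finset.Icc 1 k := by
    intro x hx
    rw [hS, Finset.mem_insert] at hx
    rw [Finset.mem_Icc]
    rcases hx with rfl | hx
    · exact Set.mem_Icc.1 (hv _)
    · obtain ⟨i, -, rfl⟩ := Finset.mem_image.1 hx
      exact Set.mem_Icc.1 (he _ (hedge i))
  have := Finset.card_le_card hsub
  rwa [hcard, Nat.card_Icc, Nat.add_sub_cancel] at this

lemma lower_bound_eq {n k : ℕ} (hn : 0 < n) (cv : Fin n ⊕ Fin n → ℕ)
    (ce : Sym2 (Fin n ⊕ Fin n) → ℕ) (h : IsTotalColoring (KB n n) cv ce)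
    (hv : ∀ v, cv v ∈ Set.Icc 1 k)
    (he : ∀ e ∈ (KB n n).edgeSet, ce e ∈ Set.Icc 1 k) : n + 2 ≤ k := by
  classical
  by_contra hk
  have hk1 : k = n + 1 := by
    have := lower_bound_right hn cv ce h hv he
    omega
  subst hk1
  obtain ⟨hV, hE, hI⟩ := h
  have hedge : ∀ (i j : Fin n), (s(inl i, inr j) : Sym2 (Fin n ⊕ Fin n)) ∈ (KB n n).edgeSet :=
    fun i j => by simp
  set i0 : Fin n := ⟨0, hn⟩ with hi0
  set c : ℕ := cv (inl i0) with hc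
  have key : ∀ j : Fin n, ∃ i : Fin n, ce s(inl i, inr j) = c := by
    intro j
    set S : Finset ℕ :=
      insert (cv (inr j)) (Finset.image (fun i : Fin n => ce s(inl i, inr j)) Finset.univ)
      with hS
    have hinj : Function.Injective (fun i : Fin n => ce s(inl i, inr j)) := by
      intro i1 i2 hcc
      by_contra hne
      exact hE _ _ (hedge i1 j) (hedge i2 j)
        (by rw [Ne, edge_eq_iff]; exact fun h => hne h.1)
        ⟨inr j, by simp, by simp⟩ hcc
    have hnotmem : cv (inr j) ∉ Finset.image (fun i : Fin n => ce s(inl i, inr j)) Finset.univ := by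
      simp only [Finset.mem_image, Finset.mem_univ, true_and, not_exists]
      exact fun i => fun hcc => hI (inr j) _ (hedge i j) (by simp) hcc.symm
    have hcard : S.card = n + 1 := by
      rw [hS, Finset.card_insert_of_notMem hnotmem, Finset.card_image_of_injective _ hinj,
        Finset.card_univ, Fintype.card_fin]
    have hsub : S ⊆ Finset.Icc 1 (n + 1) := by
      intro x hx
      rw [hS, Finset.mem_insert] at hx
      rw [Finset.mem_Icc]
      rcases hx with rfl | hx
      · exact Set.mem_Icc.1 (hv _)
      · obtain ⟨i, -, rfl⟩ := Finset.mem_image.1 hx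
        exact Set.mem_Icc.1 (he _ (hedge i j))
    have hSeq : S = Finset.Icc 1 (n + 1) :=
      Finset.eq_of_subset_of_card_le hsub (by rw [hcard, Nat.card_Icc]; omega)
    have hcmem : c ∈ S := by
      rw [hSeq, Finset.mem_Icc]
      exact Set.mem_Icc.1 (hv (inl i0))
    rw [hS, Finset.mem_insert] at hcmem
    rcases hcmem with hcc | hcc
    · exact absurd hcc (hV (inl i0) (inr j) (by simp))
    · obtain ⟨i, -, hi⟩ := Finset.mem_image.1 hcc
      exact ⟨i, hi⟩
  choose f hf using key
  have hfinj : Function.Injective f := by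
    intro j1 j2 hff
    by_contra hne
    refine hE s(inl (f j1), inr j1) s(inl (f j2), inr j2) (hedge _ _) (hedge _ _)
      (by rw [Ne, edge_eq_iff]; exact fun h => hne h.2)
      ⟨inl (f j1), by simp, by simp [hff]⟩ ?_
    rw [hf j1, hf j2]
  obtain ⟨j, hj⟩ := (Finite.injective_iff_surjective.1 hfinj) i0
  have := hI (inl i0) s(inl (f j), inr j) (hedge _ _) (by simp [hj])
  rw [hf j] at this
  exact this rfl

end Lower

theorem stmt1 (m n : ℕ) (hm : 0 < m) (hn : 0 < n) :
    totalChromaticNumber (completeBipartiteGraph (Fin m) (Fin n)) =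
      if m ≠ n then max m n + 1 else n + 2 := by
  rw [totalChromaticNumber]
  rcases eq_or_ne m n with rfl | hmn
  · simp only [ne_eq, not_true_eq_false, if_false, if_neg (not_not.2 rfl)]
    have hmem : (m + 2) ∈ {k | ∃ cv ce, IsTotalColoring (KB m m) cv ce ∧
        (∀ v, cv v ∈ Set.Icc 1 k) ∧ ∀ e ∈ (KB m m).edgeSet, ce e ∈ Set.Icc 1 k} := by
      have := upper_mem m m (m + 1) (by omega) (by omega)
      exact this
    refine le_antisymm (Nat.sInf_le hmem) (le_csInf ⟨_, hmem⟩ ?_)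
    rintro k ⟨cv, ce, hc, hv, he⟩
    exact lower_bound_eq hm cv ce hc hv he
  · rw [if_pos hmn]
    have hmem : (max m n + 1) ∈ {k | ∃ cv ce, IsTotalColoring (KB m n) cv ce ∧
        (∀ v, cv v ∈ Set.Icc 1 k) ∧ ∀ e ∈ (KB m n).edgeSet, ce e ∈ Set.Icc 1 k} := by
      rcases Nat.lt_or_ge m n with hlt | hge
      · rw [Nat.max_eq_right hlt.le]
        exact upper_mem m n n hlt le_rfl
      · have hlt : n < m := lt_of_le_of_ne hge (Ne.symm hmn)
        rw [Nat.max_eq_left hlt.le]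
        exact upper_mem' m n m le_rfl hlt
    refine le_antisymm (Nat.sInf_le hmem) (le_csInf ⟨_, hmem⟩ ?_)
    rintro k ⟨cv, ce, hc, hv, he⟩
    have h1 := lower_bound_right hm cv ce hc hv he
    have h2 := lower_bound_left hn cv ce hc hv he
    omega

end ITC
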